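/- If a system (G, W, U) is (λ, μ)-k-generalized-coalitionally smooth, then every k-strong Nash equilibrium a* with respect to U satisfies W(a*) ≥ (λ_ζ/(1+μ_ζ))·W(a°) for every ζ ∈ [k], where a° maximizes W. -/

import Mathlib

open Finset

/-- In the joint action `a`, replace the actions of the agents in `Γ` by those from `a'`. -/
def deviate {n : ℕ} {A : Fin n → Type*} (a a' : ∀ i, A i) (Γ : Finset (Fin n)) :
    ∀ i, A i := fun i => if i ∈ Γ then a' i else a i

/-- `a` is a k-strong Nash equilibrium of the common-interest game with welfare `W`:
no group of between 1 and k agents can deviate to strictly improve `W`. -/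
def kSNE {n : ℕ} {A : Fin n → Type*} (W : (∀ i, A i) → ℝ) (k : ℕ) (a : ∀ i, A i) : Prop :=
  ∀ Γ : Finset (Fin n), 1 ≤ Γ.card → Γ.card ≤ k → ∀ a' : ∀ i, A i,
    W (deviate a a' Γ) ≤ W a

/-- (λ,μ)-k-generalized coalitional smoothness of the system (G, W, U). -/
def GenCoalSmooth {n : ℕ} {A : Fin n → Type*} (W U : (∀ i, A i) → ℝ) (k : ℕ)
    (lam mu : ℕ → ℝ) : Prop :=
  ∀ a a' : ∀ i, A i, ∀ ζ, 1 ≤ ζ → ζ ≤ k →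
    lam ζ * W a' - mu ζ * W a ≤
      (1 / (n.choose ζ : ℝ)) *
          (∑ Γ ∈ Finset.powersetCard ζ (Finset.univ : Finset (Fin n)),
            U (deviate a a' Γ))
        - U a + W a

/-- if (G, W, U) is (λ,μ)-k-generalized-coalitionally smooth, every
k-strong Nash equilibrium a* with respect to the utility U satisfies
W(a*) ≥ (λ_ζ/(1+μ_ζ))·W(a°) for every ζ ∈ [k], where a° maximizes W. -/
theorem stmt_13 {n k : ℕ} {A : Fin n → Type*}
    (W U : (∀ i, A i) → ℝ) (hW : ∀ a, 0 ≤ W a) (hU : ∀ a, 0 ≤ U a)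
    (lam mu : ℕ → ℝ) (hlam : ∀ ζ, 0 ≤ lam ζ) (hmu : ∀ ζ, 0 ≤ mu ζ)
    (hsmooth : GenCoalSmooth W U k lam mu)
    (astar : ∀ i, A i) (hstar : kSNE U k astar)
    (aopt : ∀ i, A i) (hopt : ∀ a, W a ≤ W aopt) :
    ∀ ζ, 1 ≤ ζ → ζ ≤ k → (lam ζ / (1 + mu ζ)) * W aopt ≤ W astar := by
  intro ζ h1 hk
  have hs := hsmooth astar aopt ζ h1 hk
  have hsum : (1 / (n.choose ζ : ℝ)) *
      (∑ Γ ∈ Finset.powersetCard ζ (Finset.univ : Finset (Fin n)),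
        U (deviate astar aopt Γ)) ≤ U astar := by
    have hcard : (Finset.powersetCard ζ (Finset.univ : Finset (Fin n))).card = n.choose ζ := by
      simp [Finset.card_powersetCard]
    have hbound : ∑ Γ ∈ Finset.powersetCard ζ (Finset.univ : Finset (Fin n)),
        U (deviate astar aopt Γ) ≤ (n.choose ζ : ℝ) * U astar := by
      rw [← hcard]
      calc ∑ Γ ∈ Finset.powersetCard ζ (Finset.univ : Finset (Fin n)),
            U (deviate astar aopt Γ)
          ≤ ∑ Γ ∈ Finset.powersetCard ζ (Finset.univ : Finset (Fin n)), U astar := by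
            apply Finset.sum_le_sum
            intro Γ hΓ
            have hΓc : Γ.card = ζ := (Finset.mem_powersetCard.mp hΓ).2
            exact hstar Γ (hΓc ▸ h1) (hΓc ▸ hk) aopt
        _ = (Finset.powersetCard ζ (Finset.univ : Finset (Fin n))).card * U astar := by
            rw [Finset.sum_const, nsmul_eq_mul]
    rcases Nat.eq_zero_or_pos (n.choose ζ) with h0 | hpos
    · simp [h0]; exact hU astar
    · have hposR : (0:ℝ) < (n.choose ζ : ℝ) := by exact_mod_cast hpos
      rw [one_div, inv_mul_le_iff₀ hposR]
      linarith [hbound]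
  have key : lam ζ * W aopt ≤ (1 + mu ζ) * W astar := by nlinarith [hW astar]
  have hpos : (0:ℝ) < 1 + mu ζ := by linarith [hmu ζ]
  rw [div_mul_eq_mul_div, div_le_iff₀ hpos]
  linarith [key]
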